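/- Let l be a nonnegative integer and ω > 0. (i) The function y₁(r) = r² − (3+2l)/(2ω) satisfies r·y₁″(r) + (−2ω r² + 2(l+1))·y₁′(r) + 4ω·r·y₁(r) = 0 for all r ∈ ℝ. (ii) For σ ∈ {+1, −1}, the function y(r) = r² + σ·√((5+4l)/ω)·r + (l+1)/ω satisfies r·y″(r) + (−2ω r² + 2(l+1))·y′(r) + 4ω·r·y(r) = Z·y(r) for all r ∈ ℝ, where Z = 2σ·√((5+4l)·ω). -/

import Mathlib

/-- n = 2 QES sector of the Hooke atom: eigenvalues `Z₁ = 0` and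
`Z_{2,3} = ±2√((5+4l)ω)` of the Stäckel-transformed operator, with quadratic
polynomial eigenfunctions. -/
theorem hooke_oscillator_n2 (l : ℕ) (ω : ℝ) (hω : 0 < ω) :
    (∀ y₁ : ℝ → ℝ, y₁ = (fun r : ℝ => r ^ 2 - (3 + 2 * (l : ℝ)) / (2 * ω)) →
      ∀ r : ℝ,
        r * deriv (deriv y₁) r
          + (-2 * ω * r ^ 2 + 2 * ((l : ℝ) + 1)) * deriv y₁ r
          + 4 * ω * r * y₁ r = 0)
    ∧ (∀ σ : ℝ, σ = 1 ∨ σ = -1 →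
        ∀ y : ℝ → ℝ, y = (fun r : ℝ =>
          r ^ 2 + σ * Real.sqrt ((5 + 4 * (l : ℝ)) / ω) * r + ((l : ℝ) + 1) / ω) →
        ∀ r : ℝ,
          r * deriv (deriv y) r
            + (-2 * ω * r ^ 2 + 2 * ((l : ℝ) + 1)) * deriv y r
            + 4 * ω * r * y r
          = (2 * σ * Real.sqrt ((5 + 4 * (l : ℝ)) * ω)) * y r) := by
  have h5 : (0:ℝ) ≤ 5 + 4 * (l : ℝ) := by positivity
  have hω' : ω ≠ 0 := hω.ne'
  have hlin : ∀ a c : ℝ, deriv (fun r : ℝ => r ^ 2 + a * r + c) = fun x : ℝ => 2 * x + a := by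
    intro a c
    funext x
    have h := ((hasDerivAt_pow 2 x).add ((hasDerivAt_id x).const_mul a)).add_const c
    have h2 : HasDerivAt (fun r : ℝ => r ^ 2 + a * r + c) (2 * x + a) x := by
      refine h.congr_deriv ?_
      norm_num
    exact h2.deriv
  have haff : ∀ a : ℝ, ∀ x : ℝ, deriv (fun x : ℝ => 2 * x + a) x = 2 := by
    intro a x
    have h : HasDerivAt (fun x : ℝ => 2 * x + a) 2 x := by
      have := ((hasDerivAt_id x).const_mul (2:ℝ)).add_const a
      exact this.congr_deriv (by ring)
    exact h.deriv
  constructor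
  · intro y₁ hy r
    subst hy
    have h1 : deriv (fun r : ℝ => r ^ 2 - (3 + 2 * (l : ℝ)) / (2 * ω)) = fun x : ℝ => 2 * x + 0 := by
      funext x
      have h := (hasDerivAt_pow 2 x).sub_const ((3 + 2 * (l : ℝ)) / (2 * ω))
      have h2 : HasDerivAt (fun r : ℝ => r ^ 2 - (3 + 2 * (l : ℝ)) / (2 * ω)) (2 * x + 0) x := by
        refine h.congr_deriv ?_
        norm_num
      exact h2.deriv
    rw [h1, haff 0 r]
    field_simp
    ring
  · intro σ hσ y hy r
    set s := Real.sqrt ((5 + 4 * (l : ℝ)) / ω) with hs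
    have hs2 : s ^ 2 = (5 + 4 * (l : ℝ)) / ω := Real.sq_sqrt (by positivity)
    have hkey : Real.sqrt ((5 + 4 * (l : ℝ)) * ω) = ω * s := by
      rw [hs, ← Real.sqrt_sq hω.le, ← Real.sqrt_mul (by positivity)]
      congr 1
      field_simp
      ring
      exact Real.sq_sqrt (by positivity)
    subst hy
    rw [hlin (σ * s) (((l : ℝ) + 1) / ω), haff (σ * s) r, hkey]
    have hσ2 : σ ^ 2 = 1 := by rcases hσ with h | h <;> simp [h]
    have hws : ω * s ^ 2 = 5 + 4 * (l : ℝ) := by rw [hs2]; field_simp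
    field_simp
    linear_combination (-2*r*σ^2) * hws + (-2*r*(5+4*(l:ℝ))) * hσ2
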